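/- Let 0 < a ≤ 1 and u, v > 0 be real numbers, set R₁ = u²·v² − 4·u²·v − 4·u·v² + 18·u·v − 27 and H₃ = a³·u³·v³ − 4·a³·u³·v² − 4·a³·u²·v³ + 17·a³·u²·v² + 4·a³·u²·v + 4·a³·u·v² − 2·a²·u²·v² − 45·a³·u·v + 8·a²·u²·v + 8·a²·u·v² − 36·a²·u·v + 27·a³ − 4·a·u·v + 54·a² + 36·a + 8. If either (u·v > 1, R₁ < 0 and H₃ > 0) or (u·v > 1, R₁ > 0 and H₃ < 0), then the set of stable positive equilibria of Kopel's model with homogeneous adaptive expectations (b = a), i.e. the set of pairs (x, y) ∈ ℝ² with x > 0, y > 0, x = u·y·(1−y), y = v·x·(1−x), such that every complex root λ of λ² − (2 − 2a)·λ + ((1−a)² − u·v·a²·(1−2x)(1−2y)) satisfies |λ| < 1, has exactly one element. -/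

import Mathlib

namespace KopelAux


/-- Jury criterion specialized: roots of λ² − (2−2a)λ + ((1−a)² − a²K) all
have modulus < 1 iff K < 1 and aK − a + 2 > 0, for 0 < a ≤ 1. -/
lemma kopel_jury (a K : ℝ) (ha : 0 < a) (ha1 : a ≤ 1) :
    (∀ l : ℂ, l ^ 2 - ((2 - 2 * a : ℝ) : ℂ) * l + (((1 - a) ^ 2 - a ^ 2 * K : ℝ) : ℂ) = 0 →
      ‖l‖ < 1) ↔ (K < 1 ∧ 0 < a * K - a + 2) := by
  constructor
  · intro H
    rcases le_or_gt 0 K with hK | hK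
    · -- real roots; use l = (1-a) + a*√K
      have hsq : Real.sqrt K ^ 2 = K := Real.sq_sqrt hK
      have hroot : ((1 - a + a * Real.sqrt K : ℝ) : ℂ) ^ 2
          - ((2 - 2 * a : ℝ) : ℂ) * ((1 - a + a * Real.sqrt K : ℝ) : ℂ)
          + (((1 - a) ^ 2 - a ^ 2 * K : ℝ) : ℂ) = 0 := by
        have : (1 - a + a * Real.sqrt K : ℝ) ^ 2
            - (2 - 2 * a) * (1 - a + a * Real.sqrt K) + ((1 - a) ^ 2 - a ^ 2 * K) = 0 := by
          linear_combination (a^2) * hsq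
        exact_mod_cast congrArg (fun t : ℝ => (t : ℂ)) this
      have h1 := H _ hroot
      rw [Complex.norm_real, Real.norm_eq_abs] at h1
      have hs0 : 0 ≤ Real.sqrt K := Real.sqrt_nonneg K
      have h2 : 1 - a + a * Real.sqrt K < 1 := by
        calc 1 - a + a * Real.sqrt K ≤ |1 - a + a * Real.sqrt K| := le_abs_self _
        _ < 1 := h1
      have hsK : Real.sqrt K < 1 := by nlinarith
      have hK1 : K < 1 := by nlinarith
      exact ⟨hK1, by nlinarith⟩
    · -- complex roots; use l = (1-a) + i a √(-K)
      set t := Real.sqrt (-K) with ht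
      have hsq : t ^ 2 = -K := Real.sq_sqrt (by linarith)
      set l : ℂ := ⟨1 - a, a * t⟩ with hl
      have hre : l.re = 1 - a := rfl
      have him : l.im = a * t := rfl
      have hroot : l ^ 2 - ((2 - 2 * a : ℝ) : ℂ) * l + (((1 - a) ^ 2 - a ^ 2 * K : ℝ) : ℂ) = 0 := by
        apply Complex.ext <;>
          simp [Complex.add_re, Complex.add_im, Complex.sub_re, Complex.sub_im, pow_two,
            Complex.mul_re, Complex.mul_im, Complex.ofReal_re, Complex.ofReal_im, hre, him] <;>
          nlinarith [hsq]
      have h1 := H _ hroot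
      have habs : ‖l‖ ^ 2 = (1 - a) ^ 2 - a ^ 2 * K := by
        rw [Complex.sq_norm, Complex.normSq_apply, hre, him]; nlinarith [hsq]
      have h2 : (1 - a) ^ 2 - a ^ 2 * K < 1 := by
        rw [← habs]; nlinarith [norm_nonneg l]
      constructor
      · linarith
      · nlinarith
  · rintro ⟨hK1, hP⟩ l hl
    rcases le_or_gt 0 K with hK | hK
    · have hsq : Real.sqrt K ^ 2 = K := Real.sq_sqrt hK
      have hs0 : 0 ≤ Real.sqrt K := Real.sqrt_nonneg K
      have hsK : Real.sqrt K < 1 := by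
        nlinarith [hsq, hs0, sq_nonneg (Real.sqrt K - 1)]
      -- factor: (l - (1-a+a√K))(l - (1-a-a√K)) = 0
      have hfac : (l - ((1 - a + a * Real.sqrt K : ℝ) : ℂ))
          * (l - ((1 - a - a * Real.sqrt K : ℝ) : ℂ)) = 0 := by
        have hsqC : ((Real.sqrt K : ℝ) : ℂ) ^ 2 = (K : ℂ) := by exact_mod_cast congrArg (fun t : ℝ => (t : ℂ)) hsq
        have hl' : l ^ 2 - (2 - 2 * (a:ℂ)) * l + ((1 - (a:ℂ)) ^ 2 - (a:ℂ) ^ 2 * (K:ℂ)) = 0 := by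
          push_cast at hl ⊢; linear_combination hl
        push_cast
        linear_combination hl' - (a:ℂ)^2 * hsqC
      rcases mul_eq_zero.1 hfac with h0 | h0
      · have : l = ((1 - a + a * Real.sqrt K : ℝ) : ℂ) := by linear_combination h0
        rw [this, Complex.norm_real, Real.norm_eq_abs, abs_lt]
        constructor <;> nlinarith
      · have : l = ((1 - a - a * Real.sqrt K : ℝ) : ℂ) := by linear_combination h0
        rw [this, Complex.norm_real, Real.norm_eq_abs, abs_lt]
        constructor <;> nlinarith
    · set t := Real.sqrt (-K) with ht
      have hsq : t ^ 2 = -K := Real.sq_sqrt (by linarith)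
      have ht0 : 0 ≤ t := Real.sqrt_nonneg _
      have hfac : (l - ((1 - a : ℝ) + (a * t : ℝ) * Complex.I))
          * (l - ((1 - a : ℝ) - (a * t : ℝ) * Complex.I)) = 0 := by
        have hsqC : ((t : ℝ) : ℂ) ^ 2 = (-K : ℂ) := by exact_mod_cast congrArg (fun t : ℝ => (t : ℂ)) hsq
        have hl' : l ^ 2 - (2 - 2 * (a:ℂ)) * l + ((1 - (a:ℂ)) ^ 2 - (a:ℂ) ^ 2 * (K:ℂ)) = 0 := by
          push_cast at hl ⊢; linear_combination hl
        have hI : Complex.I ^ 2 = -1 := Complex.I_sq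
        push_cast
        linear_combination hl' - (a:ℂ)^2*((t:ℝ):ℂ)^2 * hI + (a:ℂ)^2 * hsqC
      have habs : ∀ s : ℝ, ‖((1 - a : ℝ) : ℂ) + (s : ℂ) * Complex.I‖ ^ 2
          = (1 - a) ^ 2 + s ^ 2 := by
        intro s
        rw [Complex.sq_norm, Complex.normSq_apply]
        simp [Complex.add_re, Complex.add_im, Complex.mul_re, Complex.mul_im]
        ring
      have hD : (1 - a) ^ 2 + (a * t) ^ 2 < 1 := by nlinarith
      rcases mul_eq_zero.1 hfac with h0 | h0
      · have : l = ((1 - a : ℝ) : ℂ) + ((a * t : ℝ) : ℂ) * Complex.I := by linear_combination h0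
        rw [this]
        have := habs (a * t)
        nlinarith [norm_nonneg (((1 - a : ℝ) : ℂ) + ((a * t : ℝ) : ℂ) * Complex.I)]
      · have : l = ((1 - a : ℝ) : ℂ) - ((a * t : ℝ) : ℂ) * Complex.I := by linear_combination h0
        have heq : ((1 - a : ℝ) : ℂ) - ((a * t : ℝ) : ℂ) * Complex.I
            = ((1 - a : ℝ) : ℂ) + ((-(a * t) : ℝ) : ℂ) * Complex.I := by push_cast; ring
        rw [this, heq]
        have := habs (-(a * t))
        nlinarith [norm_nonneg (((1 - a : ℝ) : ℂ) + ((-(a * t) : ℝ) : ℂ) * Complex.I)]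



/-- cubic whose roots in (0,1) are the x-coordinates of positive equilibria -/
def gk (u v x : ℝ) : ℝ := u * v * (1 - x) * (1 - v * x * (1 - x)) - 1
def W4k (v x : ℝ) : ℝ := -3 * v * x ^ 2 + 4 * v * x - 4
def V1k (v x : ℝ) : ℝ := 3 * v * x ^ 2 - 4 * v * x + v + 1
def Pk (a u v x : ℝ) : ℝ := 2 - a * u * v * x * V1k v x
def R1k (u v : ℝ) : ℝ := u ^ 2 * v ^ 2 - 4 * u ^ 2 * v - 4 * u * v ^ 2 + 18 * u * v - 27
def H3k (a u v : ℝ) : ℝ :=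
  a ^ 3 * u ^ 3 * v ^ 3 - 4 * a ^ 3 * u ^ 3 * v ^ 2 - 4 * a ^ 3 * u ^ 2 * v ^ 3 +
    17 * a ^ 3 * u ^ 2 * v ^ 2 + 4 * a ^ 3 * u ^ 2 * v + 4 * a ^ 3 * u * v ^ 2 -
    2 * a ^ 2 * u ^ 2 * v ^ 2 - 45 * a ^ 3 * u * v + 8 * a ^ 2 * u ^ 2 * v +
    8 * a ^ 2 * u * v ^ 2 - 36 * a ^ 2 * u * v + 27 * a ^ 3 - 4 * a * u * v +
    54 * a ^ 2 + 36 * a + 8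
def A8k (a u v x : ℝ) : ℝ :=
  -24 * a * u * v ^ 3 * x ^ 3 + 56 * a * u * v ^ 3 * x ^ 2 - 32 * a * u * v ^ 3 * x -
    32 * a * u * v ^ 2 * x + 32 * a * u * v ^ 2 + 16 * v
def B4k (a u v x : ℝ) : ℝ := 8 * a * u * v ^ 3 * x - 8 * a * u * v ^ 3 + 8 * a * u * v ^ 2
def qk (v x X : ℝ) : ℝ := v * X ^ 2 + v * (x - 2) * X + (v + 1 + v * x ^ 2 - 2 * v * x)

lemma key1 (u v x : ℝ) (hg : gk u v x = 0) :
    u ^ 2 * v * W4k v x * V1k v x ^ 2 = R1k u v := by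
  unfold gk at hg
  unfold W4k V1k R1k
  linear_combination (27*u*v^2*x^3 + (-54)*u*v^2*x^2 + 27*u*v^2*x + (-4)*u*v^2 + 27*u*v*x
    + (-9)*u*v + (-27)) * hg

lemma key2 (a u v x : ℝ) (hg : gk u v x = 0) :
    Pk a u v x * (v * A8k a u v x ^ 2 - W4k v x * B4k a u v x ^ 2) = 64 * v ^ 3 * H3k a u v := by
  unfold gk at hg
  unfold Pk V1k W4k A8k B4k H3k
  linear_combination (1728*a^3*u^2*v^7*x^6 + (-6912)*a^3*u^2*v^7*x^5 + 10368*a^3*u^2*v^7*x^4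
    + (-7168)*a^3*u^2*v^7*x^3 + 2240*a^3*u^2*v^7*x^2 + (-256)*a^3*u^2*v^7*x
    + 3456*a^3*u^2*v^6*x^4 + (-7488)*a^3*u^2*v^6*x^3 + 4608*a^3*u^2*v^6*x^2
    + (-832)*a^3*u^2*v^6*x + 1728*a^3*u^2*v^5*x^2 + (-576)*a^3*u^2*v^5*x + (-64)*a^3*u^2*v^5
    + 256*a^3*u^2*v^4 + (-1728)*a^3*u*v^5*x^3 + 3456*a^3*u*v^5*x^2 + (-1728)*a^3*u*v^5*x
    + 256*a^3*u*v^5 + (-1728)*a^3*u*v^4*x + (-1152)*a^3*u*v^4 + 1728*a^3*v^3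
    + (-3456)*a^2*u*v^5*x^3 + 6912*a^2*u*v^5*x^2 + (-3456)*a^2*u*v^5*x + 512*a^2*u*v^5
    + (-3456)*a^2*u*v^4*x + 1152*a^2*u*v^4 + 3456*a^2*v^3 + 2304*a*v^3) * hg

lemma keyL1 (a u v x s : ℝ) (hs : 4 * v * s ^ 2 = W4k v x) :
    64 * v ^ 3 * (Pk a u v ((2 - x) / 2 - s) * Pk a u v ((2 - x) / 2 + s)) =
      v * A8k a u v x ^ 2 - W4k v x * B4k a u v x ^ 2 := by
  unfold W4k at hs
  unfold Pk V1k W4k A8k B4k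
  linear_combination ((-189)*a^2*u^2*v^6*x^4 + 624*a^2*u^2*v^6*x^3 + 216*a^2*u^2*v^6*x^2*s^2
    + (-740)*a^2*u^2*v^6*x^2 + (-384)*a^2*u^2*v^6*x*s^2 + 368*a^2*u^2*v^6*x
    + (-144)*a^2*u^2*v^6*s^4 + 208*a^2*u^2*v^6*s^2 + (-64)*a^2*u^2*v^6 + (-252)*a^2*u^2*v^5*x^2
    + 368*a^2*u^2*v^5*x + 48*a^2*u^2*v^5*s^2 + (-112)*a^2*u^2*v^5 + (-64)*a^2*u^2*v^4
    + 288*a*u*v^4*x + (-320)*a*u*v^4) * hs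

lemma factg (u v x X : ℝ) (hg : gk u v x = 0) :
    v * gk u v X = -(u * v ^ 2 * (X - x) * qk v x X) := by
  unfold gk at hg ⊢
  unfold qk
  linear_combination v * hg

lemma qfact (v x s X : ℝ) (hs : 4 * v * s ^ 2 = W4k v x) :
    qk v x X = v * (X - ((2 - x) / 2 - s)) * (X - ((2 - x) / 2 + s)) := by
  unfold W4k at hs; unfold qk
  linear_combination (1/4) * hs

lemma V1fact_x (v x s : ℝ) (hs : 4 * v * s ^ 2 = W4k v x) :
    V1k v x = v * (x - ((2 - x) / 2 - s)) * (x - ((2 - x) / 2 + s)) := by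
  unfold W4k at hs; unfold V1k
  linear_combination (1/4) * hs

lemma V1fact_r2 (v x s : ℝ) (hs : 4 * v * s ^ 2 = W4k v x) :
    V1k v ((2 - x) / 2 - s) =
      v * (((2 - x) / 2 - s) - x) * (((2 - x) / 2 - s) - ((2 - x) / 2 + s)) := by
  unfold W4k at hs; unfold V1k
  linear_combination (1/4) * hs

lemma V1fact_r3 (v x s : ℝ) (hs : 4 * v * s ^ 2 = W4k v x) :
    V1k v ((2 - x) / 2 + s) =
      v * (((2 - x) / 2 + s) - x) * (((2 - x) / 2 + s) - ((2 - x) / 2 - s)) := by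
  unfold W4k at hs; unfold V1k
  linear_combination (1/4) * hs

-- sign facts
lemma W4_neg_V1_pos (v x : ℝ) (hv : 0 < v) (hW : W4k v x < 0) (hV : V1k v x ≠ 0) :
    0 < V1k v x := by
  unfold W4k at hW; unfold V1k at hV ⊢
  rcases lt_trichotomy (3 * v * x ^ 2 - 4 * v * x + v + 1) 0 with h | h | h
  · exfalso
    nlinarith [sq_nonneg (3 * v * x - 2 * v), sq_nonneg (v - 3), sq_nonneg x, mul_pos hv hv]
  · exact absurd h hV
  · exact h

lemma W4_pos_x_mem (v x : ℝ) (hv : 0 < v) (hW : 0 < W4k v x) : 0 < x := by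
  unfold W4k at hW
  nlinarith [sq_nonneg x, mul_pos hv hv]


lemma mem_iff (a u v x y : ℝ) (ha : 0 < a) (ha1 : a ≤ 1) (hu : 0 < u) (hv : 0 < v) :
    (0 < x ∧ 0 < y ∧ x = u * y * (1 - y) ∧ y = v * x * (1 - x) ∧
      ∀ l : ℂ, l ^ 2 - ((2 - 2 * a : ℝ) : ℂ) * l +
        (((1 - a) ^ 2 - u * v * a ^ 2 * (1 - 2 * x) * (1 - 2 * y) : ℝ) : ℂ) = 0 →
        ‖l‖ < 1) ↔
    (0 < x ∧ x < 1 ∧ gk u v x = 0 ∧ 0 < V1k v x ∧ 0 < Pk a u v x ∧ y = v * x * (1 - x)) := by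
  have hid : u * v * x * V1k v x
      = 1 - u * v * (1 - 2 * x) * (1 - 2 * (v * x * (1 - x))) + gk u v x := by
    unfold V1k gk; ring
  constructor
  · rintro ⟨hx, hy, hxe, hye, hst⟩
    subst hye
    have hx1 : x < 1 := by nlinarith [mul_pos hv hx]
    have hg : gk u v x = 0 := by
      have hmul : gk u v x * x = 0 := by unfold gk; linear_combination -hxe
      exact (mul_eq_zero.mp hmul).resolve_right (ne_of_gt hx)
    have hco : (1 - a) ^ 2 - u * v * a ^ 2 * (1 - 2 * x) * (1 - 2 * (v * x * (1 - x)))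
        = (1 - a) ^ 2 - a ^ 2 * (u * v * (1 - 2 * x) * (1 - 2 * (v * x * (1 - x)))) := by ring
    rw [hco] at hst
    obtain ⟨hK1, hP⟩ := (kopel_jury a _ ha ha1).mp hst
    rw [hg, add_zero] at hid
    have hm : 0 < u * v * x := by positivity
    have hprodpos : 0 < u * v * x * V1k v x := by rw [hid]; linarith
    have hV1 : 0 < V1k v x := by nlinarith
    have hPkeq : Pk a u v x = a * (u * v * (1 - 2 * x) * (1 - 2 * (v * x * (1 - x)))) - a + 2 := by
      unfold Pk; linear_combination (-a) * hid
    exact ⟨hx, hx1, hg, hV1, by rw [hPkeq]; linarith, rfl⟩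
  · rintro ⟨hx, hx1, hg, hV1, hPk, hye⟩
    subst hye
    have hy : 0 < v * x * (1 - x) := by
      have : 0 < 1 - x := by linarith
      positivity
    have hxe : x = u * (v * x * (1 - x)) * (1 - v * x * (1 - x)) := by
      unfold gk at hg; linear_combination (-x) * hg
    refine ⟨hx, hy, by linear_combination hxe, rfl, ?_⟩
    have hco : (1 - a) ^ 2 - u * v * a ^ 2 * (1 - 2 * x) * (1 - 2 * (v * x * (1 - x)))
        = (1 - a) ^ 2 - a ^ 2 * (u * v * (1 - 2 * x) * (1 - 2 * (v * x * (1 - x)))) := by ring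
    rw [hco]
    rw [hg, add_zero] at hid
    apply (kopel_jury a _ ha ha1).mpr
    have hm : 0 < u * v * x := by positivity
    constructor
    · nlinarith [mul_pos hm hV1]
    · have hPkeq : Pk a u v x
          = a * (u * v * (1 - 2 * x) * (1 - 2 * (v * x * (1 - x)))) - a + 2 := by
        unfold Pk; linear_combination (-a) * hid
      rw [← hPkeq]; exact hPk


end KopelAux

namespace KopelAux

/-- Helper: choose the unique stable root among an ordered triple of roots. -/
lemma case2_finish (a u v r1 r2 r3 : ℝ)
    (h12 : r1 < r2) (h23 : r2 < r3)
    (hm1 : 0 < r1 ∧ r1 < 1) (hm2 : 0 < r2 ∧ r2 < 1) (hm3 : 0 < r3 ∧ r3 < 1)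
    (hg1 : gk u v r1 = 0) (hg2 : gk u v r2 = 0) (hg3 : gk u v r3 = 0)
    (hV11 : 0 < V1k v r1) (hV12 : V1k v r2 < 0) (hV13 : 0 < V1k v r3)
    (hP2 : 0 < Pk a u v r2)
    (hProd : Pk a u v r1 * Pk a u v r2 * Pk a u v r3 < 0)
    (huniq : ∀ X, gk u v X = 0 → X = r1 ∨ X = r2 ∨ X = r3) :
    ∃ ρ, (0 < ρ ∧ ρ < 1 ∧ gk u v ρ = 0 ∧ 0 < V1k v ρ ∧ 0 < Pk a u v ρ) ∧
      ∀ X, (0 < X ∧ X < 1 ∧ gk u v X = 0 ∧ 0 < V1k v X ∧ 0 < Pk a u v X) → X = ρ := by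
  have h13 : Pk a u v r1 * Pk a u v r3 < 0 := by nlinarith
  rcases lt_trichotomy (Pk a u v r1) 0 with hneg | h0 | hpos
  · -- stable root is r3
    have hP3 : 0 < Pk a u v r3 := by nlinarith
    refine ⟨r3, ⟨hm3.1, hm3.2, hg3, hV13, hP3⟩, ?_⟩
    rintro X ⟨_, _, hgX, hV1X, hPX⟩
    rcases huniq X hgX with rfl | rfl | rfl
    · exact absurd hPX (by linarith)
    · exact absurd hV1X (by linarith)
    · rfl
  · exact absurd h13 (by rw [h0]; simp)
  · -- stable root is r1
    have hP3 : Pk a u v r3 < 0 := by nlinarith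
    refine ⟨r1, ⟨hm1.1, hm1.2, hg1, hV11, hpos⟩, ?_⟩
    rintro X ⟨_, _, hgX, hV1X, hPX⟩
    rcases huniq X hgX with rfl | rfl | rfl
    · rfl
    · exact absurd hV1X (by linarith)
    · exact absurd hPX (by linarith)

end KopelAux

set_option maxHeartbeats 2000000 in
open KopelAux in
/-- One stable positive equilibrium for Kopel's model with homogeneous adaptive
expectations (b = a). -/
theorem kopel_homogeneous_one_stable_positive_equilibrium
    (a u v : ℝ) (ha : 0 < a) (ha1 : a ≤ 1) (hu : 0 < u) (hv : 0 < v)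
    (h : (1 < u * v ∧
            u ^ 2 * v ^ 2 - 4 * u ^ 2 * v - 4 * u * v ^ 2 + 18 * u * v - 27 < 0 ∧
            0 < a ^ 3 * u ^ 3 * v ^ 3 - 4 * a ^ 3 * u ^ 3 * v ^ 2 - 4 * a ^ 3 * u ^ 2 * v ^ 3 +
              17 * a ^ 3 * u ^ 2 * v ^ 2 + 4 * a ^ 3 * u ^ 2 * v + 4 * a ^ 3 * u * v ^ 2 -
              2 * a ^ 2 * u ^ 2 * v ^ 2 - 45 * a ^ 3 * u * v + 8 * a ^ 2 * u ^ 2 * v +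
              8 * a ^ 2 * u * v ^ 2 - 36 * a ^ 2 * u * v + 27 * a ^ 3 - 4 * a * u * v +
              54 * a ^ 2 + 36 * a + 8) ∨
         (1 < u * v ∧
            0 < u ^ 2 * v ^ 2 - 4 * u ^ 2 * v - 4 * u * v ^ 2 + 18 * u * v - 27 ∧
            a ^ 3 * u ^ 3 * v ^ 3 - 4 * a ^ 3 * u ^ 3 * v ^ 2 - 4 * a ^ 3 * u ^ 2 * v ^ 3 +
              17 * a ^ 3 * u ^ 2 * v ^ 2 + 4 * a ^ 3 * u ^ 2 * v + 4 * a ^ 3 * u * v ^ 2 -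
              2 * a ^ 2 * u ^ 2 * v ^ 2 - 45 * a ^ 3 * u * v + 8 * a ^ 2 * u ^ 2 * v +
              8 * a ^ 2 * u * v ^ 2 - 36 * a ^ 2 * u * v + 27 * a ^ 3 - 4 * a * u * v +
              54 * a ^ 2 + 36 * a + 8 < 0)) :
    {p : ℝ × ℝ | 0 < p.1 ∧ 0 < p.2 ∧
      p.1 = u * p.2 * (1 - p.2) ∧ p.2 = v * p.1 * (1 - p.1) ∧
      ∀ l : ℂ,
        l ^ 2 - ((2 - 2 * a : ℝ) : ℂ) * l +
          (((1 - a) ^ 2 - u * v * a ^ 2 * (1 - 2 * p.1) * (1 - 2 * p.2) : ℝ) : ℂ) = 0 →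
        ‖l‖ < 1}.encard = 1 := by
  have huv : 1 < u * v := by rcases h with ⟨h1, _, _⟩ | ⟨h1, _, _⟩ <;> exact h1
  have hune : u ≠ 0 := ne_of_gt hu
  have hvne : v ≠ 0 := ne_of_gt hv
  -- a real root of gk in (0,1) by IVT
  have hgc : ContinuousOn (fun x : ℝ => gk u v x) (Set.Icc 0 1) := by
    unfold gk; fun_prop
  have hg0 : gk u v 0 = u * v - 1 := by unfold gk; ring
  have hg1 : gk u v 1 = -1 := by unfold gk; ring
  obtain ⟨x₁, hx₁mem, hgx₁⟩ : ∃ x ∈ Set.Ioo (0 : ℝ) 1, gk u v x = 0 := by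
    have hsub := intermediate_value_Ioo' (by norm_num : (0:ℝ) ≤ 1) hgc
    have h0mem : (0 : ℝ) ∈ Set.Ioo (gk u v 1) (gk u v 0) := by
      rw [hg0, hg1]; constructor <;> [norm_num; linarith]
    obtain ⟨x, hx, hxg⟩ := hsub h0mem
    exact ⟨x, hx, hxg⟩
  obtain ⟨hx₁0, hx₁1⟩ := hx₁mem
  -- key facts at any root, depending on sign of R1
  have keysign : ∀ X, gk u v X = 0 → u ^ 2 * v * W4k v X * V1k v X ^ 2 = R1k u v :=
    fun X hX => key1 u v X hX
  suffices hS : ∃ ρ, (0 < ρ ∧ ρ < 1 ∧ gk u v ρ = 0 ∧ 0 < V1k v ρ ∧ 0 < Pk a u v ρ) ∧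
      ∀ X, (0 < X ∧ X < 1 ∧ gk u v X = 0 ∧ 0 < V1k v X ∧ 0 < Pk a u v X) → X = ρ by
    obtain ⟨ρ, ⟨hρ0, hρ1, hρg, hρV, hρP⟩, hak⟩ := hS
    rw [Set.encard_eq_one]
    refine ⟨(ρ, v * ρ * (1 - ρ)), ?_⟩
    ext p
    obtain ⟨X, Y⟩ := p
    simp only [Set.mem_setOf_eq, Set.mem_singleton_iff, Prod.mk.injEq]
    rw [mem_iff a u v X Y ha ha1 hu hv]
    constructor
    · rintro ⟨h1, h2, h3, h4, h5, h6⟩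
      have hXρ := hak X ⟨h1, h2, h3, h4, h5⟩
      subst hXρ
      exact ⟨rfl, h6⟩
    · rintro ⟨rfl, rfl⟩
      exact ⟨hρ0, hρ1, hρg, hρV, hρP, rfl⟩
  rcases h with ⟨-, hR1, hH3⟩ | ⟨-, hR1, hH3⟩
  · -- Case 1 : R1 < 0, H3 > 0 : unique real root, stable
    have hR1' : R1k u v < 0 := hR1
    have hH3' : 0 < H3k a u v := hH3
    clear hR1 hH3
    have hW4 : W4k v x₁ < 0 := by
      by_contra hW
      push_neg at hW
      have h1 : (0:ℝ) ≤ u ^ 2 * v := by positivity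
      have h2 : (0:ℝ) ≤ u ^ 2 * v * W4k v x₁ := mul_nonneg h1 hW
      have h3 : (0:ℝ) ≤ u ^ 2 * v * W4k v x₁ * V1k v x₁ ^ 2 := mul_nonneg h2 (sq_nonneg _)
      rw [keysign x₁ hgx₁] at h3
      linarith
    have hV1ne : V1k v x₁ ≠ 0 := by
      intro h0
      have := keysign x₁ hgx₁
      rw [h0] at this
      simp at this
      rw [← this] at hR1'
      linarith
    have hV1 : 0 < V1k v x₁ := W4_neg_V1_pos v x₁ hv hW4 hV1ne
    have hk2 := key2 a u v x₁ hgx₁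
    have hfac2 : 0 ≤ v * A8k a u v x₁ ^ 2 - W4k v x₁ * B4k a u v x₁ ^ 2 := by
      nlinarith [sq_nonneg (A8k a u v x₁), sq_nonneg (B4k a u v x₁)]
    have hPx₁ : 0 < Pk a u v x₁ := by nlinarith [pow_pos hv 3]
    refine ⟨x₁, ⟨hx₁0, hx₁1, hgx₁, hV1, hPx₁⟩, ?_⟩
    rintro X ⟨hX0, hX1, hgX, -, -⟩
    by_contra hne
    have hf := factg u v x₁ X hgx₁
    rw [hgX, mul_zero] at hf
    have hq0 : (X - x₁) * qk v x₁ X = 0 := by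
      have h5 : u * v ^ 2 * ((X - x₁) * qk v x₁ X) = 0 := by linarith [hf]
      exact (mul_eq_zero.mp h5).resolve_left (by positivity)
    have hqpos : 0 < qk v x₁ X := by
      have hiden : 4 * v * qk v x₁ X
          = (2 * v * X + v * (x₁ - 2)) ^ 2 - v * W4k v x₁ := by
        unfold qk W4k; ring
      nlinarith [sq_nonneg (2 * v * X + v * (x₁ - 2)), mul_pos hv (neg_pos.mpr hW4)]
    have : X - x₁ = 0 := (mul_eq_zero.mp hq0).resolve_right (ne_of_gt hqpos)
    exact hne (by linarith)
  · -- Case 2 : R1 > 0, H3 < 0 : three distinct real roots, exactly one stable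
    have hR1' : 0 < R1k u v := hR1
    have hH3' : H3k a u v < 0 := hH3
    clear hR1 hH3
    have keyW : ∀ X, gk u v X = 0 → 0 < W4k v X ∧ V1k v X ≠ 0 := by
      intro X hX
      constructor
      · by_contra hW
        push_neg at hW
        have h2 : (0:ℝ) ≤ u ^ 2 * v * V1k v X ^ 2 := by positivity
        nlinarith [keysign X hX]
      · intro h0
        have := keysign X hX
        rw [h0] at this
        simp at this
        rw [← this] at hR1'
        linarith
    obtain ⟨hW4x₁, hV1x₁ne⟩ := keyW x₁ hgx₁
    -- the square root giving the other two roots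
    have harg : 0 < W4k v x₁ / (4 * v) := div_pos hW4x₁ (by positivity)
    set s := Real.sqrt (W4k v x₁ / (4 * v)) with hsdef
    have hspos : 0 < s := Real.sqrt_pos.mpr harg
    have hs : 4 * v * s ^ 2 = W4k v x₁ := by
      rw [hsdef, Real.sq_sqrt harg.le]
      field_simp
    set r2 := (2 - x₁) / 2 - s with hr2def
    set r3 := (2 - x₁) / 2 + s with hr3def
    have hr23 : r2 < r3 := by rw [hr2def, hr3def]; linarith
    have hsum : x₁ + r2 + r3 = 2 := by rw [hr2def, hr3def]; ring
    -- r2, r3 are roots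
    have hqf : ∀ X, qk v x₁ X = v * (X - r2) * (X - r3) := by
      intro X
      rw [hr2def, hr3def]
      exact qfact v x₁ s X hs
    have hgr2 : gk u v r2 = 0 := by
      have hf := factg u v x₁ r2 hgx₁
      rw [hqf r2] at hf
      have : v * gk u v r2 = 0 := by rw [hf]; ring
      exact (mul_eq_zero.mp this).resolve_left hvne
    have hgr3 : gk u v r3 = 0 := by
      have hf := factg u v x₁ r3 hgx₁
      rw [hqf r3] at hf
      have : v * gk u v r3 = 0 := by rw [hf]; ring
      exact (mul_eq_zero.mp this).resolve_left hvne
    obtain ⟨hW4r2, hV1r2ne⟩ := keyW r2 hgr2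
    obtain ⟨hW4r3, hV1r3ne⟩ := keyW r3 hgr3
    have hr20 : 0 < r2 := W4_pos_x_mem v r2 hv hW4r2
    have hr30 : 0 < r3 := W4_pos_x_mem v r3 hv hW4r3
    -- x₁ differs from r2 r3
    have hV1xfac := V1fact_x v x₁ s hs
    rw [← hr2def, ← hr3def] at hV1xfac
    have hx₁r2 : x₁ ≠ r2 := by
      intro h0
      apply hV1x₁ne
      rw [hV1xfac, h0]
      ring
    have hx₁r3 : x₁ ≠ r3 := by
      intro h0
      apply hV1x₁ne
      rw [hV1xfac, h0]
      ring
    -- all roots below 1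
    have hprod1 : u * v ^ 2 * (1 - x₁) * (v * (1 - r2) * (1 - r3)) = v := by
      have hf := factg u v x₁ 1 hgx₁
      rw [hqf 1, hg1] at hf
      linear_combination hf
    have h1r23 : 0 < (1 - r2) * (1 - r3) := by
      have hx₁1' : 0 < 1 - x₁ := by linarith
      by_contra hT
      push_neg at hT
      have h1 : 0 < u * v ^ 2 * (1 - x₁) := by positivity
      have h2 : v * ((1 - r2) * (1 - r3)) ≤ 0 := mul_nonpos_of_nonneg_of_nonpos hv.le hT
      have h3 := mul_nonpos_of_nonneg_of_nonpos h1.le h2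
      nlinarith [hprod1, h3]
    have hr31 : r3 < 1 := by
      by_contra h'
      push_neg at h'
      have h2 : 1 - r3 ≤ 0 := by linarith
      have h5 : 1 - r2 ≤ 0 := by nlinarith [h1r23, h2]
      linarith
    have hr21 : r2 < 1 := lt_trans hr23 hr31
    -- product of P over the roots equals H3
    have hk2 := key2 a u v x₁ hgx₁
    have hL1 := keyL1 a u v x₁ s hs
    rw [← hr2def, ← hr3def] at hL1
    have hProdall : Pk a u v x₁ * Pk a u v r2 * Pk a u v r3 = H3k a u v := by
      have h64 : (64 : ℝ) * v ^ 3 ≠ 0 := by positivity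
      apply mul_left_cancel₀ h64
      linear_combination Pk a u v x₁ * hL1 + hk2
    have hProdneg : Pk a u v x₁ * Pk a u v r2 * Pk a u v r3 < 0 := by
      rw [hProdall]; exact hH3'
    -- uniqueness of roots
    have huniq : ∀ X, gk u v X = 0 → X = x₁ ∨ X = r2 ∨ X = r3 := by
      intro X hX
      have hf := factg u v x₁ X hgx₁
      rw [hqf X, hX, mul_zero] at hf
      have h5 : u * v ^ 2 * ((X - x₁) * (v * (X - r2) * (X - r3))) = 0 := by
        linear_combination hf
      have h6 := (mul_eq_zero.mp h5).resolve_left (by positivity)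
      rcases mul_eq_zero.mp h6 with h7 | h7
      · exact Or.inl (sub_eq_zero.mp h7)
      · rcases mul_eq_zero.mp h7 with h8 | h8
        · rcases mul_eq_zero.mp h8 with h9 | h9
          · exact absurd h9 hvne
          · exact Or.inr (Or.inl (sub_eq_zero.mp h9))
        · exact Or.inr (Or.inr (sub_eq_zero.mp h8))
    -- V1 factorizations
    have hV1r2fac := V1fact_r2 v x₁ s hs
    have hV1r3fac := V1fact_r3 v x₁ s hs
    rw [← hr2def, ← hr3def] at hV1r2fac hV1r3fac
    -- trichotomy on the position of x₁
    rcases lt_trichotomy x₁ r2 with hlt | heq | hgt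
    · -- x₁ < r2 < r3
      have hV11 : 0 < V1k v x₁ := by
        rw [hV1xfac]
        nlinarith [mul_pos hv (mul_pos_of_neg_of_neg
          (show x₁ - r2 < 0 by linarith) (show x₁ - r3 < 0 by linarith))]
      have hV12 : V1k v r2 < 0 := by
        rw [hV1r2fac]
        nlinarith [mul_pos (mul_pos hv (sub_pos.mpr hlt)) (sub_pos.mpr hr23)]
      have hV13 : 0 < V1k v r3 := by
        rw [hV1r3fac]
        exact mul_pos (mul_pos hv (sub_pos.mpr (lt_trans hlt hr23))) (sub_pos.mpr hr23)
      have hP2 : 0 < Pk a u v r2 := by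
        unfold Pk
        nlinarith [mul_pos (mul_pos (mul_pos (mul_pos ha hu) hv) hr20) (neg_pos.mpr hV12)]
      exact case2_finish a u v x₁ r2 r3 hlt hr23 ⟨hx₁0, hx₁1⟩ ⟨hr20, hr21⟩ ⟨hr30, hr31⟩
        hgx₁ hgr2 hgr3 hV11 hV12 hV13 hP2 hProdneg huniq
    · exact absurd heq hx₁r2
    · -- r2 < x₁
      rcases lt_trichotomy x₁ r3 with hlt3 | heq3 | hgt3
      · -- r2 < x₁ < r3
        have hV11 : V1k v x₁ < 0 := by
          rw [hV1xfac]
          nlinarith [mul_pos (mul_pos hv (sub_pos.mpr hgt)) (sub_pos.mpr hlt3)]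
        have hV12 : 0 < V1k v r2 := by
          rw [hV1r2fac]
          nlinarith [mul_pos hv (mul_pos_of_neg_of_neg
            (show r2 - x₁ < 0 by linarith) (show r2 - r3 < 0 by linarith))]
        have hV13 : 0 < V1k v r3 := by
          rw [hV1r3fac]
          exact mul_pos (mul_pos hv (sub_pos.mpr hlt3)) (sub_pos.mpr hr23)
        have hP2 : 0 < Pk a u v x₁ := by
          unfold Pk
          nlinarith [mul_pos (mul_pos (mul_pos (mul_pos ha hu) hv) hx₁0) (neg_pos.mpr hV11)]
        have hProdneg' : Pk a u v r2 * Pk a u v x₁ * Pk a u v r3 < 0 := by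
          rw [show Pk a u v r2 * Pk a u v x₁ * Pk a u v r3
            = Pk a u v x₁ * Pk a u v r2 * Pk a u v r3 from by ring]
          exact hProdneg
        have huniq' : ∀ X, gk u v X = 0 → X = r2 ∨ X = x₁ ∨ X = r3 := by
          intro X hX
          rcases huniq X hX with h' | h' | h' <;> tauto
        exact case2_finish a u v r2 x₁ r3 hgt hlt3 ⟨hr20, hr21⟩ ⟨hx₁0, hx₁1⟩ ⟨hr30, hr31⟩
          hgr2 hgx₁ hgr3 hV12 hV11 hV13 hP2 hProdneg' huniq'
      · exact absurd heq3 hx₁r3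
      · -- r2 < r3 < x₁
        have hV11 : 0 < V1k v x₁ := by
          rw [hV1xfac]
          exact mul_pos (mul_pos hv (sub_pos.mpr hgt)) (sub_pos.mpr hgt3)
        have hV12 : 0 < V1k v r2 := by
          rw [hV1r2fac]
          nlinarith [mul_pos hv (mul_pos_of_neg_of_neg
            (show r2 - x₁ < 0 by linarith) (show r2 - r3 < 0 by linarith))]
        have hV13 : V1k v r3 < 0 := by
          rw [hV1r3fac]
          nlinarith [mul_pos (mul_pos hv (sub_pos.mpr hgt3)) (sub_pos.mpr hr23)]
        have hP2 : 0 < Pk a u v r3 := by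
          unfold Pk
          nlinarith [mul_pos (mul_pos (mul_pos (mul_pos ha hu) hv) hr30) (neg_pos.mpr hV13)]
        have hProdneg' : Pk a u v r2 * Pk a u v r3 * Pk a u v x₁ < 0 := by
          rw [show Pk a u v r2 * Pk a u v r3 * Pk a u v x₁
            = Pk a u v x₁ * Pk a u v r2 * Pk a u v r3 from by ring]
          exact hProdneg
        have huniq' : ∀ X, gk u v X = 0 → X = r2 ∨ X = r3 ∨ X = x₁ := by
          intro X hX
          rcases huniq X hX with h' | h' | h' <;> tauto
        exact case2_finish a u v r2 r3 x₁ hr23 hgt3 ⟨hr20, hr21⟩ ⟨hr30, hr31⟩ ⟨hx₁0, hx₁1⟩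
          hgr2 hgr3 hgx₁ hV12 hV13 hV11 hP2 hProdneg' huniq'
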